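/- Let R, C, μ > 0, let n ≥ 1 be an integer with Rμ ≥ Cn, let 0 ≤ a < b and m̂ ∈ (a,b), and let m_l ≤ m_u and d_l ≤ d_u be real numbers. Suppose there exists a Borel probability measure P₀ supported on [a,b] with m_l < ∫ ρ dP₀(ρ) < m_u and d_l < ∫ |ρ−m̂| dP₀(ρ) < d_u (Slater condition). Then inf_{P ∈ 𝒫'} ∫ r_n(ρ) dP(ρ) equals the supremum of γ + θ₁ d_l − θ₂ d_u + θ₃ m_l − θ₄ m_u over γ ∈ ℝ and θ₁, θ₂, θ₃, θ₄ ≥ 0 subject to the three linear constraints (θ₁−θ₂)|a−m̂| + (θ₃−θ₄)a + γ ≤ r_n(a), (θ₃−θ₄)m̂ + γ ≤ r_n(m̂), and (θ₁−θ₂)|b−m̂| + (θ₃−θ₄)b + γ ≤ r_n(b), where 𝒫' is the set of Borel probability measures P supported on [a,b] with m_l ≤ ∫ ρ dP(ρ) ≤ m_u and d_l ≤ ∫ |ρ−m̂| dP(ρ) ≤ d_u. -/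

import Mathlib

open MeasureTheory

/-- The revenue rate function `r_n` of Naor's observable M/M/1 queue. -/
noncomputable def revenueRate (R C μ : ℝ) (n : ℕ) (ρ : ℝ) : ℝ :=
  if ρ = 1 then (R * μ - C * (n : ℝ)) * ((n : ℝ) / ((n : ℝ) + 1))
  else (R * μ - C * (n : ℝ)) * (ρ * (1 - ρ ^ n) / (1 - ρ ^ (n + 1)))

/-- The data-driven MAD ambiguity set: Borel probability measures supported on `[a,b]`
whose mean lies in `[ml, mu]` and whose MAD about `mhat` lies in `[dl, du]`. -/
def DDMADSet (a b mhat ml mu dl du : ℝ) : Set (Measure ℝ) :=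
  {P | IsProbabilityMeasure P ∧ P (Set.Icc a b)ᶜ = 0 ∧
    ml ≤ (∫ ρ, ρ ∂P) ∧ (∫ ρ, ρ ∂P) ≤ mu ∧
    dl ≤ (∫ ρ, |ρ - mhat| ∂P) ∧ (∫ ρ, |ρ - mhat| ∂P) ≤ du}

namespace Stmt12Aux

open Finset

noncomputable def Spoly (t : ℕ) (x : ℝ) : ℝ := ∑ k ∈ range t, x ^ k
noncomputable def Ppoly (t : ℕ) (x : ℝ) : ℝ := ∑ k ∈ range t, ((k : ℝ) + 1) * x ^ k
noncomputable def Qpoly (t : ℕ) (x : ℝ) : ℝ := ∑ k ∈ range t, ((k : ℝ) + 1) * ((k : ℝ) + 2) * x ^ k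

lemma Srec (t : ℕ) (x : ℝ) : Spoly (t + 1) x = 1 + x * Spoly t x := by
  induction t with
  | zero => simp [Spoly]
  | succ t ih =>
    simp only [Spoly, Finset.sum_range_succ] at ih ⊢
    push_cast at ih ⊢
    linear_combination ih

lemma Prec (t : ℕ) (x : ℝ) : Ppoly (t + 1) x = Spoly (t + 1) x + x * Ppoly t x := by
  induction t with
  | zero => simp [Ppoly, Spoly]
  | succ t ih =>
    simp only [Spoly, Ppoly, Finset.sum_range_succ] at ih ⊢
    push_cast at ih ⊢
    linear_combination ih

lemma Qrec (t : ℕ) (x : ℝ) : Qpoly (t + 1) x = 2 * Ppoly (t + 1) x + x * Qpoly t x := by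
  induction t with
  | zero => simp [Qpoly, Ppoly]
  | succ t ih =>
    simp only [Qpoly, Ppoly, Finset.sum_range_succ] at ih ⊢
    push_cast at ih ⊢
    linear_combination ih

lemma Snonneg (t : ℕ) {x : ℝ} (hx : 0 ≤ x) : 0 ≤ Spoly t x :=
  Finset.sum_nonneg fun k _ => pow_nonneg hx k

lemma Spos (t : ℕ) {x : ℝ} (hx : 0 ≤ x) : 0 < Spoly (t + 1) x := by
  rw [Srec]
  nlinarith [Snonneg t hx]

lemma Pnonneg (t : ℕ) {x : ℝ} (hx : 0 ≤ x) : 0 ≤ Ppoly t x :=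
  Finset.sum_nonneg fun k _ => by positivity





lemma gauss (k : ℕ) : ((k : ℝ) + 1) * ((k : ℝ) + 2) = ∑ j ∈ range (k + 1), 2 * ((j : ℝ) + 1) := by
  induction k with
  | zero => simp
  | succ k ih =>
    rw [Finset.sum_range_succ, ← ih]
    push_cast
    ring

lemma claimA (t : ℕ) {x : ℝ} (hx : 0 ≤ x) :
    Qpoly t x ≤ 2 * Spoly (t + 1) x * Ppoly (t + 1) x := by
  classical
  have hQ : Qpoly t x = ∑ p ∈ (range t).sigma (fun k => range (k + 1)),
      2 * ((p.2 : ℝ) + 1) * x ^ p.1 := by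
    rw [Qpoly, Finset.sum_sigma]
    apply Finset.sum_congr rfl
    intro k _
    rw [gauss k, Finset.sum_mul]
  have hinj : Set.InjOn (fun p : (Σ _ : ℕ, ℕ) => (p.1 - p.2, p.2))
      ((range t).sigma (fun k => range (k + 1))) := by
    rintro ⟨k1, j1⟩ h1 ⟨k2, j2⟩ h2 heq
    simp only [Finset.coe_sigma, Set.mem_sigma_iff, Finset.mem_coe, Finset.mem_range,
      Nat.lt_succ_iff] at h1 h2
    simp only [Prod.mk.injEq] at heq
    obtain ⟨hsub, hj⟩ := heq
    subst hj
    have : k1 = k2 := by omega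
    subst this
    rfl
  have himage : ∑ p ∈ (range t).sigma (fun k => range (k + 1)),
      2 * ((p.2 : ℝ) + 1) * x ^ p.1
      = ∑ q ∈ ((range t).sigma (fun k => range (k + 1))).image
          (fun p : (Σ _ : ℕ, ℕ) => (p.1 - p.2, p.2)),
          2 * ((q.2 : ℝ) + 1) * x ^ q.1 * x ^ q.2 := by
    rw [Finset.sum_image (fun p hp q hq h => hinj hp hq h)]
    apply Finset.sum_congr rfl
    rintro ⟨k, j⟩ hp
    simp only [Finset.mem_sigma, Finset.mem_range, Nat.lt_succ_iff] at hp
    simp only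
    have hxx : x ^ (k - j) * x ^ j = x ^ k := by
      rw [← pow_add, Nat.sub_add_cancel hp.2]
    calc 2 * ((j : ℝ) + 1) * x ^ k
        = 2 * ((j : ℝ) + 1) * (x ^ (k - j) * x ^ j) := by rw [hxx]
      _ = 2 * ((j : ℝ) + 1) * x ^ (k - j) * x ^ j := by ring
  have hsubset : ((range t).sigma (fun k => range (k + 1))).image
      (fun p : (Σ _ : ℕ, ℕ) => (p.1 - p.2, p.2))
      ⊆ (range (t + 1)) ×ˢ (range (t + 1)) := by
    intro q hq
    simp only [Finset.mem_image] at hq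
    obtain ⟨p, hp, rfl⟩ := hq
    simp only [Finset.mem_sigma, Finset.mem_range, Nat.lt_succ_iff] at hp
    simp only [Finset.mem_product, Finset.mem_range, Nat.lt_succ_iff]
    omega
  have hle : ∑ q ∈ ((range t).sigma (fun k => range (k + 1))).image
        (fun p : (Σ _ : ℕ, ℕ) => (p.1 - p.2, p.2)),
        2 * ((q.2 : ℝ) + 1) * x ^ q.1 * x ^ q.2
      ≤ ∑ q ∈ (range (t + 1)) ×ˢ (range (t + 1)),
        2 * ((q.2 : ℝ) + 1) * x ^ q.1 * x ^ q.2 := by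
    apply Finset.sum_le_sum_of_subset_of_nonneg hsubset
    intro q _ _
    positivity
  have hsq : ∑ q ∈ (range (t + 1)) ×ˢ (range (t + 1)),
      2 * ((q.2 : ℝ) + 1) * x ^ q.1 * x ^ q.2
      = 2 * Spoly (t + 1) x * Ppoly (t + 1) x := by
    rw [Finset.sum_product]
    have hrow : ∀ i, (∑ j ∈ range (t + 1), 2 * ((j : ℝ) + 1) * x ^ i * x ^ j)
        = x ^ i * (2 * Ppoly (t + 1) x) := by
      intro i
      rw [Ppoly, Finset.mul_sum, Finset.mul_sum]
      apply Finset.sum_congr rfl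
      intro j _
      ring
    rw [Finset.sum_congr rfl (fun i _ => hrow i), ← Finset.sum_mul, ← Spoly]
    ring
  rw [hQ, himage, ← hsq]
  exact hle

lemma key (m : ℕ) {x : ℝ} (hx : 0 ≤ x) :
    Qpoly m x * Spoly (m + 2) x ≤ 2 * (Ppoly (m + 1) x) ^ 2 := by
  induction m with
  | zero =>
    simp only [Qpoly, Finset.range_zero, Finset.sum_empty, zero_mul]
    positivity
  | succ m ih =>
    have e1 := Srec (m + 2) x
    have e2 := Prec (m + 1) x
    have e3 := Qrec m x
    have hA := claimA (m + 1) hx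
    rw [e2] at hA ⊢
    rw [e3] at hA ⊢
    rw [show m + 1 + 2 = m + 2 + 1 from rfl, e1]
    nlinarith [mul_le_mul_of_nonneg_left ih (sq_nonneg x), hA, Spos (m + 1) hx,
      Pnonneg (m + 1) hx, Snonneg m hx]



lemma contS (t : ℕ) : Continuous (Spoly t) := by
  unfold Spoly
  exact continuous_finset_sum _ (fun i _ => continuous_pow i)

lemma hasDerivS (t : ℕ) (x : ℝ) : HasDerivAt (Spoly (t + 1)) (Ppoly t x) x := by
  have h : HasDerivAt (fun y : ℝ => ∑ k ∈ range (t + 1), y ^ k)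
      (∑ k ∈ range (t + 1), (k : ℝ) * x ^ (k - 1)) x :=
    HasDerivAt.fun_sum fun k _ => hasDerivAt_pow k x
  have he : (∑ k ∈ range (t + 1), (k : ℝ) * x ^ (k - 1)) = Ppoly t x := by
    rw [Finset.sum_range_succ' (fun k => (k : ℝ) * x ^ (k - 1)), Ppoly]
    push_cast
    simp
  rwa [he] at h

lemma hasDerivP (t : ℕ) (x : ℝ) : HasDerivAt (Ppoly (t + 1)) (Qpoly t x) x := by
  have h : HasDerivAt (fun y : ℝ => ∑ k ∈ range (t + 1), ((k : ℝ) + 1) * y ^ k)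
      (∑ k ∈ range (t + 1), ((k : ℝ) + 1) * ((k : ℝ) * x ^ (k - 1))) x :=
    HasDerivAt.fun_sum fun k _ => (hasDerivAt_pow k x).const_mul _
  have he : (∑ k ∈ range (t + 1), ((k : ℝ) + 1) * ((k : ℝ) * x ^ (k - 1))) = Qpoly t x := by
    rw [Finset.sum_range_succ' (fun k => ((k : ℝ) + 1) * ((k : ℝ) * x ^ (k - 1))), Qpoly]
    push_cast
    simp only [Nat.add_sub_cancel, Nat.cast_zero, zero_add, pow_zero, mul_one, zero_mul,
      mul_zero, add_zero]
    apply Finset.sum_congr rfl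
    intro k _
    ring
  rwa [he] at h

lemma hasDerivInvS (N : ℕ) {x : ℝ} (hx : 0 ≤ x) :
    HasDerivAt (fun y => (Spoly (N + 2) y)⁻¹)
      (-Ppoly (N + 1) x / (Spoly (N + 2) x) ^ 2) x :=
  (hasDerivS (N + 1) x).inv (Spos (N + 1) hx).ne'

lemma convexInvS (N : ℕ) : ConvexOn ℝ (Set.Ici 0) (fun x => (Spoly (N + 2) x)⁻¹) := by
  have hIoi : interior (Set.Ici (0:ℝ)) = Set.Ioi 0 := interior_Ici
  have hD : ∀ x ∈ Set.Ioi (0:ℝ), deriv (fun y => (Spoly (N + 2) y)⁻¹) x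
      = -Ppoly (N + 1) x / (Spoly (N + 2) x) ^ 2 := fun x hx =>
    (hasDerivInvS N (le_of_lt hx)).deriv
  have hDg : ∀ x ∈ Set.Ioi (0:ℝ),
      HasDerivAt (fun y => -Ppoly (N + 1) y / (Spoly (N + 2) y) ^ 2)
        ((-Qpoly N x * (Spoly (N + 2) x) ^ 2 -
          (-Ppoly (N + 1) x) * (2 * Spoly (N + 2) x ^ 1 * Ppoly (N + 1) x)) /
          ((Spoly (N + 2) x) ^ 2) ^ 2) x := by
    intro x hx
    have h1 : HasDerivAt (fun y => -Ppoly (N + 1) y) (-Qpoly N x) x := (hasDerivP N x).neg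
    have h2 : HasDerivAt (fun y => (Spoly (N + 2) y) ^ 2)
        (2 * Spoly (N + 2) x ^ 1 * Ppoly (N + 1) x) x := (hasDerivS (N + 1) x).pow 2
    exact h1.div h2 (pow_ne_zero 2 (Spos (N + 1) (le_of_lt hx)).ne')
  have hDeq : ∀ x ∈ Set.Ioi (0:ℝ),
      deriv (fun y => (Spoly (N + 2) y)⁻¹) =ᶠ[nhds x]
        (fun y => -Ppoly (N + 1) y / (Spoly (N + 2) y) ^ 2) := by
    intro x hx
    filter_upwards [isOpen_Ioi.mem_nhds hx] with y hy
    exact hD y hy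
  apply convexOn_of_deriv2_nonneg (convex_Ici 0)
  · exact (ContinuousOn.inv₀ (contS (N + 2)).continuousOn
      (fun x hx => (Spos (N + 1) hx).ne'))
  · rw [hIoi]
    intro x hx
    exact (hasDerivInvS N (le_of_lt hx)).differentiableAt.differentiableWithinAt
  · rw [hIoi]
    intro x hx
    have := ((hDeq x hx).differentiableAt_iff).mpr (hDg x hx).differentiableAt
    exact this.differentiableWithinAt
  · rw [hIoi]
    intro x hx
    have h2 : deriv^[2] (fun y => (Spoly (N + 2) y)⁻¹) x
        = deriv (deriv (fun y => (Spoly (N + 2) y)⁻¹)) x := by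
      simp [Function.iterate_succ_apply']
    rw [h2, (hDeq x hx).deriv_eq, (hDg x hx).deriv]
    have hS := Spos (N + 1) (le_of_lt hx)
    have hk := key N (le_of_lt hx)
    have hnum : 0 ≤ -Qpoly N x * Spoly (N + 2) x ^ 2 -
        -Ppoly (N + 1) x * (2 * Spoly (N + 2) x ^ 1 * Ppoly (N + 1) x) := by
      nlinarith [hk, hS]
    positivity

lemma revEq (R C μ : ℝ) (n : ℕ) {ρ : ℝ} (hρ : 0 ≤ ρ) :
    revenueRate R C μ n ρ = (R * μ - C * (n : ℝ)) * (1 - (Spoly (n + 1) ρ)⁻¹) := by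
  by_cases h1 : ρ = 1
  · subst h1
    have hS : Spoly (n + 1) 1 = (n : ℝ) + 1 := by
      simp [Spoly]
    rw [revenueRate, if_pos rfl, hS]
    have : (n : ℝ) + 1 ≠ 0 := by positivity
    field_simp
    ring
  · have hS := (Spos n hρ).ne'
    have hgeom : (1 - ρ) * Spoly (n + 1) ρ = 1 - ρ ^ (n + 1) := by
      have := geom_sum_mul ρ (n + 1)
      rw [Spoly]
      nlinarith [this]
    have hden : 1 - ρ ^ (n + 1) ≠ 0 := by
      rcases lt_or_gt_of_ne h1 with h | h
      · have hp : ρ ^ (n + 1) < 1 := pow_lt_one₀ hρ h (by omega)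
        intro heq
        nlinarith
      · have hp : 1 < ρ ^ (n + 1) := one_lt_pow₀ h (by omega)
        intro heq
        nlinarith
    rw [revenueRate, if_neg h1]
    have hSinv : (Spoly (n + 1) ρ)⁻¹ = (1 - ρ) / (1 - ρ ^ (n + 1)) := by
      rw [inv_eq_one_div, div_eq_div_iff hS hden, one_mul]
      linarith [hgeom]
    have hgoal : ρ * (1 - ρ ^ n) / (1 - ρ ^ (n + 1)) = 1 - (Spoly (n + 1) ρ)⁻¹ := by
      rw [hSinv]
      field_simp
      ring
    rw [hgoal]

lemma concaveRev (R C μ : ℝ) (n : ℕ) (hn : 1 ≤ n) (hK : 0 ≤ R * μ - C * (n : ℝ)) :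
    ConcaveOn ℝ (Set.Ici 0)
      (fun ρ => (R * μ - C * (n : ℝ)) * (1 - (Spoly (n + 1) ρ)⁻¹)) := by
  obtain ⟨N, rfl⟩ : ∃ N, n = N + 1 := ⟨n - 1, (Nat.succ_pred_eq_of_pos hn).symm⟩
  push_cast at hK
  set K := R * μ - C * ((N : ℝ) + 1) with hKdef
  have h1 : ConvexOn ℝ (Set.Ici 0) (fun x : ℝ => K • (Spoly (N + 2) x)⁻¹) :=
    (convexInvS N).smul (by rw [hKdef]; linarith)
  have h2 : ConcaveOn ℝ (Set.Ici 0) (fun x : ℝ => -(K • (Spoly (N + 2) x)⁻¹) + K) :=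
    h1.neg.add (concaveOn_const K (convex_Ici 0))
  have heq : (fun ρ : ℝ => (R * μ - C * (((N + 1 : ℕ)) : ℝ)) * (1 - (Spoly (N + 1 + 1) ρ)⁻¹))
      = (fun x : ℝ => -(K • (Spoly (N + 2) x)⁻¹) + K) := by
    funext x
    show (R * μ - C * (((N + 1 : ℕ)) : ℝ)) * (1 - (Spoly (N + 2) x)⁻¹) = _
    simp only [smul_eq_mul, hKdef]
    push_cast
    ring
  rw [heq]
  exact h2

lemma chord {f : ℝ → ℝ} (hf : ConcaveOn ℝ (Set.Ici 0) f) {α β c d x : ℝ}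
    (hc : 0 ≤ c) (hd : 0 ≤ d) (hcd : c ≤ d) (hx : x ∈ Set.Icc c d)
    (h1 : α * c + β ≤ f c) (h2 : α * d + β ≤ f d) : α * x + β ≤ f x := by
  obtain ⟨hxc, hxd⟩ := hx
  rcases eq_or_lt_of_le hcd with h | h
  · subst h
    have : x = c := le_antisymm hxd hxc
    subst this
    exact h1
  · have hdc : 0 < d - c := by linarith
    set t := (d - x) / (d - c) with ht
    set u := (x - c) / (d - c) with hu
    have ht0 : 0 ≤ t := div_nonneg (by linarith) hdc.le
    have hu0 : 0 ≤ u := div_nonneg (by linarith) hdc.le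
    have htu : t + u = 1 := by
      rw [ht, hu]
      field_simp
      ring
    have hxe : t * c + u * d = x := by
      rw [ht, hu]
      field_simp
      ring
    have hcc := hf.2 (Set.mem_Ici.mpr hc) (Set.mem_Ici.mpr hd) ht0 hu0 htu
    simp only [smul_eq_mul] at hcc
    rw [hxe] at hcc
    have e1 : t * (α * c + β) ≤ t * f c := mul_le_mul_of_nonneg_left h1 ht0
    have e2 : u * (α * d + β) ≤ u * f d := mul_le_mul_of_nonneg_left h2 hu0
    have : α * x + β = t * (α * c + β) + u * (α * d + β) := by
      rw [← hxe]
      linear_combination (-β) * htu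
    linarith

lemma combo_lt {p q x y s t : ℝ} (h1 : p < x) (h2 : q < y) (hs : 0 ≤ s) (ht : 0 ≤ t)
    (hst : s + t = 1) : s * p + t * q < s * x + t * y := by
  rcases eq_or_lt_of_le hs with h | h
  · rw [← h] at hst ⊢
    simp only [zero_mul, zero_add] at *
    have : t = 1 := by linarith
    rw [this]
    linarith
  · nlinarith

open MeasureTheory in
lemma integrable_of_icc {a b : ℝ} {P : Measure ℝ} [IsProbabilityMeasure P]
    (hP : P (Set.Icc a b)ᶜ = 0) {f : ℝ → ℝ} (hf : AEStronglyMeasurable f P)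
    {M : ℝ} (hM : ∀ ρ ∈ Set.Icc a b, |f ρ| ≤ M) : Integrable f P := by
  refine (integrable_const M).mono' hf ?_
  rw [ae_iff]
  refine measure_mono_null (fun x hx => ?_) hP
  simp only [Set.mem_setOf_eq, Real.norm_eq_abs, not_le] at hx
  intro hmem
  exact absurd (hM x hmem) (not_le.mpr hx)

open MeasureTheory in
lemma integral_ge_of_icc {a b : ℝ} {P : Measure ℝ} [IsProbabilityMeasure P]
    (hP : P (Set.Icc a b)ᶜ = 0) {f : ℝ → ℝ} (hfi : Integrable f P)
    {lo : ℝ} (h : ∀ ρ ∈ Set.Icc a b, lo ≤ f ρ) : lo ≤ ∫ x, f x ∂P := by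
  have hle : (∫ _, lo ∂P) ≤ ∫ x, f x ∂P := by
    apply integral_mono_ae (integrable_const lo) hfi
    rw [Filter.EventuallyLE, ae_iff]
    refine measure_mono_null (fun x hx => ?_) hP
    simp only [Set.mem_setOf_eq, not_le] at hx
    intro hmem
    exact absurd (h x hmem) (not_le.mpr hx)
  simpa [integral_const] using hle

open MeasureTheory in
lemma mix_prob {P Q : Measure ℝ} [IsProbabilityMeasure P] [IsProbabilityMeasure Q]
    {s t : ℝ} (hs : 0 ≤ s) (ht : 0 ≤ t) (hst : s + t = 1) :
    IsProbabilityMeasure (ENNReal.ofReal s • P + ENNReal.ofReal t • Q) := by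
  constructor
  simp only [Measure.coe_add, Measure.coe_smul, Pi.add_apply, Pi.smul_apply,
    measure_univ, smul_eq_mul, mul_one]
  rw [← ENNReal.ofReal_add hs ht, hst, ENNReal.ofReal_one]

open MeasureTheory in
lemma mix_integral {P Q : Measure ℝ} [IsProbabilityMeasure P] [IsProbabilityMeasure Q]
    {s t : ℝ} (hs : 0 ≤ s) (ht : 0 ≤ t) {f : ℝ → ℝ}
    (hfP : Integrable f P) (hfQ : Integrable f Q) :
    ∫ x, f x ∂(ENNReal.ofReal s • P + ENNReal.ofReal t • Q)
      = s * ∫ x, f x ∂P + t * ∫ x, f x ∂Q := by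
  rw [integral_add_measure (hfP.smul_measure ENNReal.ofReal_ne_top)
        (hfQ.smul_measure ENNReal.ofReal_ne_top),
      integral_smul_measure, integral_smul_measure,
      ENNReal.toReal_ofReal hs, ENNReal.toReal_ofReal ht]
  simp [smul_eq_mul]

lemma measurable_rev (R C μ : ℝ) (n : ℕ) : Measurable (revenueRate R C μ n) := by
  unfold revenueRate
  apply Measurable.ite (measurableSet_eq)
  · exact measurable_const
  · fun_prop

lemma rev_bound (R C μ : ℝ) (n : ℕ) {a b : ℝ} (ha : 0 ≤ a) :
    ∃ M, ∀ ρ ∈ Set.Icc a b, |revenueRate R C μ n ρ| ≤ M := by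
  have hcont : ContinuousOn (revenueRate R C μ n) (Set.Icc a b) := by
    apply ContinuousOn.congr
      (f := fun ρ : ℝ => (R * μ - C * (n : ℝ)) * (1 - (Spoly (n + 1) ρ)⁻¹))
    · apply ContinuousOn.mul continuousOn_const
      apply ContinuousOn.sub continuousOn_const
      apply ContinuousOn.inv₀ (contS (n + 1)).continuousOn
      intro x hx
      exact (Spos n (le_trans ha hx.1)).ne'
    · intro ρ hρ
      exact revEq R C μ n (le_trans ha hρ.1)
  obtain ⟨M, hM⟩ := isCompact_Icc.exists_bound_of_continuousOn hcont
  exact ⟨M, fun ρ hρ => by simpa [Real.norm_eq_abs] using hM ρ hρ⟩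

lemma f_decomp (f : (ℝ × ℝ × ℝ × ℝ × ℝ) →L[ℝ] ℝ) (x : ℝ × ℝ × ℝ × ℝ × ℝ) :
    f x = x.1 * f (1,0,0,0,0) + x.2.1 * f (0,1,0,0,0) + x.2.2.1 * f (0,0,1,0,0)
      + x.2.2.2.1 * f (0,0,0,1,0) + x.2.2.2.2 * f (0,0,0,0,1) := by
  obtain ⟨x1, x2, x3, x4, x5⟩ := x
  have hx : ((x1, x2, x3, x4, x5) : ℝ × ℝ × ℝ × ℝ × ℝ)
      = x1 • ((1:ℝ),(0:ℝ),(0:ℝ),(0:ℝ),(0:ℝ)) + x2 • ((0:ℝ),(1:ℝ),(0:ℝ),(0:ℝ),(0:ℝ))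
      + x3 • ((0:ℝ),(0:ℝ),(1:ℝ),(0:ℝ),(0:ℝ)) + x4 • ((0:ℝ),(0:ℝ),(0:ℝ),(1:ℝ),(0:ℝ))
      + x5 • ((0:ℝ),(0:ℝ),(0:ℝ),(0:ℝ),(1:ℝ)) := by
    simp [Prod.ext_iff, smul_eq_mul]
  conv_lhs => rw [hx]
  simp only [map_add, ContinuousLinearMap.map_smul, smul_eq_mul]

lemma abs_le_of_icc {a b mhat ρ : ℝ} (hρ : ρ ∈ Set.Icc a b) :
    |ρ| ≤ max |a| |b| := by
  rw [abs_le]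
  constructor
  · have h1 : -|a| ≤ a := neg_abs_le a
    have h2 : |a| ≤ max |a| |b| := le_max_left _ _
    linarith [hρ.1]
  · have h1 : b ≤ |b| := le_abs_self b
    have h2 : |b| ≤ max |a| |b| := le_max_right _ _
    linarith [hρ.2]

lemma int_id {a b : ℝ} {P : Measure ℝ} [IsProbabilityMeasure P]
    (hn0 : P (Set.Icc a b)ᶜ = 0) : Integrable (fun ρ : ℝ => ρ) P := by
  refine integrable_of_icc hn0 measurable_id.aestronglyMeasurable (M := max |a| |b|) ?_
  intro ρ hρ
  exact abs_le_of_icc (mhat := 0) hρ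

lemma int_d {a b mhat : ℝ} {P : Measure ℝ} [IsProbabilityMeasure P]
    (hn0 : P (Set.Icc a b)ᶜ = 0) : Integrable (fun ρ : ℝ => |ρ - mhat|) P := by
  refine integrable_of_icc hn0
    ((measurable_id.sub measurable_const).abs).aestronglyMeasurable
    (M := max |a| |b| + |mhat|) ?_
  intro ρ hρ
  rw [abs_abs]
  have h1 : |ρ - mhat| ≤ |ρ| + |mhat| := abs_sub _ _
  linarith [abs_le_of_icc (mhat := mhat) hρ]

lemma int_r {R C μ : ℝ} {n : ℕ} {a b : ℝ} (ha : 0 ≤ a) {P : Measure ℝ}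
    [IsProbabilityMeasure P] (hn0 : P (Set.Icc a b)ᶜ = 0) :
    Integrable (revenueRate R C μ n) P := by
  obtain ⟨M, hM⟩ := rev_bound R C μ n (a := a) (b := b) ha
  exact integrable_of_icc hn0 (measurable_rev R C μ n).aestronglyMeasurable hM

lemma weak_dual (R C μ : ℝ) (n : ℕ) (hn : 1 ≤ n) (hK0 : 0 ≤ R * μ - C * (n : ℝ))
    (a b mhat ml mu dl du : ℝ) (ha : 0 ≤ a) (hab : a < b) (hmhat : mhat ∈ Set.Ioo a b)
    (γ θ₁ θ₂ θ₃ θ₄ : ℝ) (h1 : 0 ≤ θ₁) (h2 : 0 ≤ θ₂) (h3 : 0 ≤ θ₃) (h4 : 0 ≤ θ₄)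
    (hca : (θ₁ - θ₂) * |a - mhat| + (θ₃ - θ₄) * a + γ ≤ revenueRate R C μ n a)
    (hcm : (θ₃ - θ₄) * mhat + γ ≤ revenueRate R C μ n mhat)
    (hcb : (θ₁ - θ₂) * |b - mhat| + (θ₃ - θ₄) * b + γ ≤ revenueRate R C μ n b)
    (P : Measure ℝ) (hp : IsProbabilityMeasure P) (hn0 : P (Set.Icc a b)ᶜ = 0)
    (hmlP : ml ≤ ∫ ρ, ρ ∂P) (hmuP : (∫ ρ, ρ ∂P) ≤ mu)
    (hdlP : dl ≤ ∫ ρ, |ρ - mhat| ∂P) (hduP : (∫ ρ, |ρ - mhat| ∂P) ≤ du) :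
    γ + θ₁ * dl - θ₂ * du + θ₃ * ml - θ₄ * mu ≤ ∫ ρ, revenueRate R C μ n ρ ∂P := by
  haveI := hp
  have hmhat0 : 0 ≤ mhat := le_trans ha hmhat.1.le
  have hb0 : 0 ≤ b := le_trans ha hab.le
  have hconc := concaveRev R C μ n hn hK0
  have habs_a : |a - mhat| = mhat - a := by
    rw [abs_of_neg (by linarith [hmhat.1])]
    ring
  have habs_b : |b - mhat| = b - mhat := abs_of_pos (by linarith [hmhat.2])
  -- endpoint inequalities in terms of the smooth representative
  have hca' : ((θ₃ - θ₄) - (θ₁ - θ₂)) * a + ((θ₁ - θ₂) * mhat + γ)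
      ≤ (fun ρ : ℝ => (R * μ - C * (n : ℝ)) * (1 - (Spoly (n + 1) ρ)⁻¹)) a := by
    simp only
    rw [← revEq R C μ n ha]
    rw [habs_a] at hca
    linarith [hca]
  have hcm₁ : ((θ₃ - θ₄) - (θ₁ - θ₂)) * mhat + ((θ₁ - θ₂) * mhat + γ)
      ≤ (fun ρ : ℝ => (R * μ - C * (n : ℝ)) * (1 - (Spoly (n + 1) ρ)⁻¹)) mhat := by
    simp only
    rw [← revEq R C μ n hmhat0]
    linarith [hcm]
  have hcm₂ : ((θ₃ - θ₄) + (θ₁ - θ₂)) * mhat + (-(θ₁ - θ₂) * mhat + γ)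
      ≤ (fun ρ : ℝ => (R * μ - C * (n : ℝ)) * (1 - (Spoly (n + 1) ρ)⁻¹)) mhat := by
    simp only
    rw [← revEq R C μ n hmhat0]
    linarith [hcm]
  have hcb' : ((θ₃ - θ₄) + (θ₁ - θ₂)) * b + (-(θ₁ - θ₂) * mhat + γ)
      ≤ (fun ρ : ℝ => (R * μ - C * (n : ℝ)) * (1 - (Spoly (n + 1) ρ)⁻¹)) b := by
    simp only
    rw [← revEq R C μ n hb0]
    rw [habs_b] at hcb
    linarith [hcb]
  have hpt : ∀ ρ ∈ Set.Icc a b,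
      (θ₁ - θ₂) * |ρ - mhat| + (θ₃ - θ₄) * ρ + γ ≤ revenueRate R C μ n ρ := by
    intro ρ hρ
    rw [revEq R C μ n (le_trans ha hρ.1)]
    rcases le_total ρ mhat with hcase | hcase
    · have habs : |ρ - mhat| = mhat - ρ := by
        rw [abs_of_nonpos (by linarith)]
        ring
      rw [habs]
      have := chord hconc ha hmhat0 hmhat.1.le ⟨hρ.1, hcase⟩ hca' hcm₁
      linarith [this]
    · have habs : |ρ - mhat| = ρ - mhat := abs_of_nonneg (by linarith)
      rw [habs]
      have := chord hconc hmhat0 hb0 hmhat.2.le ⟨hcase, hρ.2⟩ hcm₂ hcb'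
      linarith [this]
  have hgint1 : Integrable (fun ρ : ℝ => (θ₁ - θ₂) * |ρ - mhat|) P := (int_d hn0).const_mul _
  have hgint2 : Integrable (fun ρ : ℝ => (θ₃ - θ₄) * ρ) P := (int_id hn0).const_mul _
  have hgint12 : Integrable (fun ρ : ℝ => (θ₁ - θ₂) * |ρ - mhat| + (θ₃ - θ₄) * ρ) P :=
    hgint1.add hgint2
  have hgint : Integrable (fun ρ : ℝ => ((θ₁ - θ₂) * |ρ - mhat| + (θ₃ - θ₄) * ρ) + γ) P :=
    hgint12.add (integrable_const γ)
  have hle : ∫ ρ, ((θ₁ - θ₂) * |ρ - mhat| + (θ₃ - θ₄) * ρ + γ) ∂P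
      ≤ ∫ ρ, revenueRate R C μ n ρ ∂P := by
    apply integral_mono_ae hgint (int_r ha hn0)
    rw [Filter.EventuallyLE, ae_iff]
    refine measure_mono_null (fun x hx => ?_) hn0
    simp only [Set.mem_setOf_eq, not_le] at hx
    intro hmem
    exact absurd (hpt x hmem) (not_le.mpr hx)
  have hsplit : ∫ ρ, ((θ₁ - θ₂) * |ρ - mhat| + (θ₃ - θ₄) * ρ + γ) ∂P
      = (θ₁ - θ₂) * (∫ ρ, |ρ - mhat| ∂P) + (θ₃ - θ₄) * (∫ ρ, ρ ∂P) + γ := by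
    rw [integral_add hgint12 (integrable_const γ),
      integral_add hgint1 hgint2, integral_const_mul, integral_const_mul, integral_const]
    simp
  have e1 : θ₁ * dl ≤ θ₁ * (∫ ρ, |ρ - mhat| ∂P) := mul_le_mul_of_nonneg_left hdlP h1
  have e2 : θ₂ * (∫ ρ, |ρ - mhat| ∂P) ≤ θ₂ * du := mul_le_mul_of_nonneg_left hduP h2
  have e3 : θ₃ * ml ≤ θ₃ * (∫ ρ, ρ ∂P) := mul_le_mul_of_nonneg_left hmlP h3
  have e4 : θ₄ * (∫ ρ, ρ ∂P) ≤ θ₄ * mu := mul_le_mul_of_nonneg_left hmuP h4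
  nlinarith [hle, hsplit, e1, e2, e3, e4]

set_option maxHeartbeats 2000000 in
lemma strong_dual (R C μ : ℝ) (n : ℕ)
    (a b mhat ml mu dl du : ℝ) (ha : 0 ≤ a) (hab : a < b) (hmhat : mhat ∈ Set.Ioo a b)
    (P₀ : Measure ℝ) (hP₀p : IsProbabilityMeasure P₀) (hP₀n : P₀ (Set.Icc a b)ᶜ = 0)
    (hml₀ : ml < ∫ ρ, ρ ∂P₀) (hmu₀ : (∫ ρ, ρ ∂P₀) < mu)
    (hdl₀ : dl < ∫ ρ, |ρ - mhat| ∂P₀) (hdu₀ : (∫ ρ, |ρ - mhat| ∂P₀) < du)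
    (v ε : ℝ) (hε : 0 < ε)
    (hv : ∀ P : Measure ℝ, IsProbabilityMeasure P → P (Set.Icc a b)ᶜ = 0 →
      ml ≤ (∫ ρ, ρ ∂P) → (∫ ρ, ρ ∂P) ≤ mu → dl ≤ (∫ ρ, |ρ - mhat| ∂P) →
      (∫ ρ, |ρ - mhat| ∂P) ≤ du → v ≤ ∫ ρ, revenueRate R C μ n ρ ∂P) :
    ∃ γ θ₁ θ₂ θ₃ θ₄ : ℝ, 0 ≤ θ₁ ∧ 0 ≤ θ₂ ∧ 0 ≤ θ₃ ∧ 0 ≤ θ₄ ∧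
      v - ε = γ + θ₁ * dl - θ₂ * du + θ₃ * ml - θ₄ * mu ∧
      (θ₁ - θ₂) * |a - mhat| + (θ₃ - θ₄) * a + γ ≤ revenueRate R C μ n a ∧
      (θ₃ - θ₄) * mhat + γ ≤ revenueRate R C μ n mhat ∧
      (θ₁ - θ₂) * |b - mhat| + (θ₃ - θ₄) * b + γ ≤ revenueRate R C μ n b := by
  classical
  haveI := hP₀p
  set O : Set (ℝ × ℝ × ℝ × ℝ × ℝ) := {x | ∃ P : Measure ℝ, IsProbabilityMeasure P ∧
      P (Set.Icc a b)ᶜ = 0 ∧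
      ml - (∫ ρ, ρ ∂P) < x.1 ∧ (∫ ρ, ρ ∂P) - mu < x.2.1 ∧
      dl - (∫ ρ, |ρ - mhat| ∂P) < x.2.2.1 ∧ (∫ ρ, |ρ - mhat| ∂P) - du < x.2.2.2.1 ∧
      (∫ ρ, revenueRate R C μ n ρ ∂P) < x.2.2.2.2} with hO_def
  -- O is open
  have hOopen : IsOpen O := by
    rw [isOpen_iff_forall_mem_open]
    rintro x ⟨P, hp, hn0, hx1, hx2, hx3, hx4, hx5⟩
    refine ⟨{y : ℝ × ℝ × ℝ × ℝ × ℝ | ml - (∫ ρ, ρ ∂P) < y.1 ∧ (∫ ρ, ρ ∂P) - mu < y.2.1 ∧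
      dl - (∫ ρ, |ρ - mhat| ∂P) < y.2.2.1 ∧ (∫ ρ, |ρ - mhat| ∂P) - du < y.2.2.2.1 ∧
      (∫ ρ, revenueRate R C μ n ρ ∂P) < y.2.2.2.2}, ?_, ?_, ?_⟩
    · intro y hy
      exact ⟨P, hp, hn0, hy.1, hy.2.1, hy.2.2.1, hy.2.2.2.1, hy.2.2.2.2⟩
    · have c1 : Continuous (fun y : ℝ × ℝ × ℝ × ℝ × ℝ => y.1) := continuous_fst
      have c2 : Continuous (fun y : ℝ × ℝ × ℝ × ℝ × ℝ => y.2.1) := continuous_fst.comp continuous_snd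
      have c3 : Continuous (fun y : ℝ × ℝ × ℝ × ℝ × ℝ => y.2.2.1) :=
        continuous_fst.comp (continuous_snd.comp continuous_snd)
      have c4 : Continuous (fun y : ℝ × ℝ × ℝ × ℝ × ℝ => y.2.2.2.1) :=
        continuous_fst.comp (continuous_snd.comp (continuous_snd.comp continuous_snd))
      have c5 : Continuous (fun y : ℝ × ℝ × ℝ × ℝ × ℝ => y.2.2.2.2) :=
        continuous_snd.comp (continuous_snd.comp (continuous_snd.comp continuous_snd))
      exact (isOpen_lt continuous_const c1).and ((isOpen_lt continuous_const c2).and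
        ((isOpen_lt continuous_const c3).and ((isOpen_lt continuous_const c4).and
          (isOpen_lt continuous_const c5))))
    · exact ⟨hx1, hx2, hx3, hx4, hx5⟩
  -- O is convex
  have hOconv : Convex ℝ O := by
    rintro x ⟨P, hpP, hnP, hP1, hP2, hP3, hP4, hP5⟩ y ⟨Q, hpQ, hnQ, hQ1, hQ2, hQ3, hQ4, hQ5⟩
      s t hs ht hst
    haveI := hpP; haveI := hpQ
    refine ⟨ENNReal.ofReal s • P + ENNReal.ofReal t • Q, mix_prob hs ht hst, ?_, ?_, ?_, ?_, ?_, ?_⟩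
    · simp only [Measure.coe_add, Measure.coe_smul, Pi.add_apply, Pi.smul_apply, hnP, hnQ,
        smul_eq_mul, mul_zero, add_zero]
    · rw [mix_integral hs ht (int_id hnP) (int_id hnQ)]
      have : (s • x + t • y).1 = s * x.1 + t * y.1 := by
        simp [Prod.fst_add, Prod.smul_fst, smul_eq_mul]
      rw [this]
      have := combo_lt hP1 hQ1 hs ht hst
      have hcml : s * ml + t * ml = ml := by linear_combination ml * hst
      linarith
    · rw [mix_integral hs ht (int_id hnP) (int_id hnQ)]
      have : (s • x + t • y).2.1 = s * x.2.1 + t * y.2.1 := by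
        simp [Prod.snd_add, Prod.smul_snd, Prod.fst_add, Prod.smul_fst, smul_eq_mul]
      rw [this]
      have := combo_lt hP2 hQ2 hs ht hst
      have hcmu : s * mu + t * mu = mu := by linear_combination mu * hst
      linarith
    · rw [mix_integral hs ht (int_d hnP) (int_d hnQ)]
      have : (s • x + t • y).2.2.1 = s * x.2.2.1 + t * y.2.2.1 := by
        simp [Prod.snd_add, Prod.smul_snd, Prod.fst_add, Prod.smul_fst, smul_eq_mul]
      rw [this]
      have := combo_lt hP3 hQ3 hs ht hst
      have hcdl : s * dl + t * dl = dl := by linear_combination dl * hst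
      linarith
    · rw [mix_integral hs ht (int_d hnP) (int_d hnQ)]
      have : (s • x + t • y).2.2.2.1 = s * x.2.2.2.1 + t * y.2.2.2.1 := by
        simp [Prod.snd_add, Prod.smul_snd, Prod.fst_add, Prod.smul_fst, smul_eq_mul]
      rw [this]
      have := combo_lt hP4 hQ4 hs ht hst
      have hcdu : s * du + t * du = du := by linear_combination du * hst
      linarith
    · rw [mix_integral hs ht (int_r ha hnP) (int_r ha hnQ)]
      have : (s • x + t • y).2.2.2.2 = s * x.2.2.2.2 + t * y.2.2.2.2 := by
        simp [Prod.snd_add, Prod.smul_snd, smul_eq_mul]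
      rw [this]
      have := combo_lt hP5 hQ5 hs ht hst
      linarith
  -- the point to separate
  set pt : ℝ × ℝ × ℝ × ℝ × ℝ := (0, 0, 0, 0, v - ε) with hpt_def
  have hptnot : pt ∉ O := by
    rintro ⟨P, hp, hn0, h1, h2, h3, h4, h5⟩
    haveI := hp
    simp only [hpt_def] at h1 h2 h3 h4 h5
    have := hv P hp hn0 (by linarith) (by linarith) (by linarith) (by linarith)
    linarith
  obtain ⟨f, u, hfu, hup'⟩ := geometric_hahn_banach_open hOconv hOopen
    (convex_singleton pt) (Set.disjoint_singleton_right.mpr hptnot)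
  have hup : u ≤ f pt := hup' pt rfl
  -- the interior point built from P₀
  set x₀ : ℝ × ℝ × ℝ × ℝ × ℝ := (ml - (∫ ρ, ρ ∂P₀) + 1, (∫ ρ, ρ ∂P₀) - mu + 1,
    dl - (∫ ρ, |ρ - mhat| ∂P₀) + 1, (∫ ρ, |ρ - mhat| ∂P₀) - du + 1,
    (∫ ρ, revenueRate R C μ n ρ ∂P₀) + 1) with hx₀_def
  have hOx₀ : x₀ ∈ O := by
    refine ⟨P₀, hP₀p, hP₀n, ?_, ?_, ?_, ?_, ?_⟩ <;> simp [hx₀_def]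
  have hfx₀ : f x₀ < u := hfu x₀ hOx₀
  -- recession directions
  have hrec : ∀ w : ℝ × ℝ × ℝ × ℝ × ℝ, 0 ≤ w.1 → 0 ≤ w.2.1 → 0 ≤ w.2.2.1 →
      0 ≤ w.2.2.2.1 → 0 ≤ w.2.2.2.2 → f w ≤ 0 := by
    intro w hw1 hw2 hw3 hw4 hw5
    by_contra hpos
    push_neg at hpos
    have hc : 0 ≤ (u - f x₀) / f w := div_nonneg (by linarith) hpos.le
    have hmem : x₀ + ((u - f x₀) / f w) • w ∈ O := by
      refine ⟨P₀, hP₀p, hP₀n, ?_, ?_, ?_, ?_, ?_⟩ <;>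
        simp only [hx₀_def, Prod.fst_add, Prod.snd_add, Prod.smul_fst, Prod.smul_snd,
          smul_eq_mul] <;>
        nlinarith [mul_nonneg hc hw1, mul_nonneg hc hw2, mul_nonneg hc hw3,
          mul_nonneg hc hw4, mul_nonneg hc hw5]
    have hlt := hfu _ hmem
    rw [map_add, ContinuousLinearMap.map_smul, smul_eq_mul, div_mul_cancel₀ _ hpos.ne'] at hlt
    linarith
  have hL1 : f (1,0,0,0,0) ≤ 0 := hrec _ (by norm_num) (by norm_num) (by norm_num) (by norm_num) (by norm_num)
  have hL2 : f (0,1,0,0,0) ≤ 0 := hrec _ (by norm_num) (by norm_num) (by norm_num) (by norm_num) (by norm_num)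
  have hL3 : f (0,0,1,0,0) ≤ 0 := hrec _ (by norm_num) (by norm_num) (by norm_num) (by norm_num) (by norm_num)
  have hL4 : f (0,0,0,1,0) ≤ 0 := hrec _ (by norm_num) (by norm_num) (by norm_num) (by norm_num) (by norm_num)
  have hL5 : f (0,0,0,0,1) ≤ 0 := hrec _ (by norm_num) (by norm_num) (by norm_num) (by norm_num) (by norm_num)
  set L1 := f (1,0,0,0,0) with hL1_def
  set L2 := f (0,1,0,0,0) with hL2_def
  set L3 := f (0,0,1,0,0) with hL3_def
  set L4 := f (0,0,0,1,0) with hL4_def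
  set L5 := f (0,0,0,0,1) with hL5_def
  -- per-measure inequality
  have hperP : ∀ P : Measure ℝ, IsProbabilityMeasure P → P (Set.Icc a b)ᶜ = 0 →
      (ml - ∫ ρ, ρ ∂P) * L1 + ((∫ ρ, ρ ∂P) - mu) * L2 + (dl - ∫ ρ, |ρ - mhat| ∂P) * L3
        + ((∫ ρ, |ρ - mhat| ∂P) - du) * L4 + (∫ ρ, revenueRate R C μ n ρ ∂P) * L5 ≤ u := by
    intro P hp hn0
    apply le_of_forall_pos_le_add
    intro δ hδ
    have hc0 : 0 ≤ -(L1 + L2 + L3 + L4 + L5) := by linarith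
    have hden : (0:ℝ) < 1 + -(L1 + L2 + L3 + L4 + L5) := by linarith
    set η := δ / (1 + -(L1 + L2 + L3 + L4 + L5)) with hη_def
    have hη : 0 < η := div_pos hδ hden
    have hηc : η * (-(L1 + L2 + L3 + L4 + L5)) ≤ δ := by
      rw [hη_def, div_mul_eq_mul_div, div_le_iff₀ hden]
      nlinarith [hc0, hδ.le]
    have hmemη : ((ml - ∫ ρ, ρ ∂P) + η, ((∫ ρ, ρ ∂P) - mu) + η,
        (dl - ∫ ρ, |ρ - mhat| ∂P) + η, ((∫ ρ, |ρ - mhat| ∂P) - du) + η,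
        (∫ ρ, revenueRate R C μ n ρ ∂P) + η) ∈ O := by
      refine ⟨P, hp, hn0, ?_, ?_, ?_, ?_, ?_⟩ <;> simp <;> linarith
    have hlt := hfu _ hmemη
    rw [f_decomp] at hlt
    simp only [← hL1_def, ← hL2_def, ← hL3_def, ← hL4_def, ← hL5_def] at hlt
    linarith [hlt, hηc]
  have hfpt : f pt = (v - ε) * L5 := by
    rw [hpt_def, f_decomp]
    simp only [← hL1_def, ← hL2_def, ← hL3_def, ← hL4_def, ← hL5_def]
    ring
  -- L5 is strictly negative
  have hL5neg : L5 < 0 := by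
    rcases lt_or_eq_of_le hL5 with h | h
    · exact h
    · exfalso
      have hu0 : u ≤ 0 := by
        rw [hfpt, h] at hup
        linarith [hup]
      have hsum := hperP P₀ hP₀p hP₀n
      rw [h] at hsum
      have hT1 : 0 ≤ (ml - ∫ ρ, ρ ∂P₀) * L1 := by nlinarith [hL1]
      have hT2 : 0 ≤ ((∫ ρ, ρ ∂P₀) - mu) * L2 := by nlinarith [hL2]
      have hT3 : 0 ≤ (dl - ∫ ρ, |ρ - mhat| ∂P₀) * L3 := by nlinarith [hL3]
      have hT4 : 0 ≤ ((∫ ρ, |ρ - mhat| ∂P₀) - du) * L4 := by nlinarith [hL4]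
      have hz1 : (ml - ∫ ρ, ρ ∂P₀) * L1 = 0 := by linarith
      have hz2 : ((∫ ρ, ρ ∂P₀) - mu) * L2 = 0 := by linarith
      have hz3 : (dl - ∫ ρ, |ρ - mhat| ∂P₀) * L3 = 0 := by linarith
      have hz4 : ((∫ ρ, |ρ - mhat| ∂P₀) - du) * L4 = 0 := by linarith
      have hL1z : L1 = 0 := by
        rcases mul_eq_zero.mp hz1 with h' | h'
        · exfalso; linarith
        · exact h'
      have hL2z : L2 = 0 := by
        rcases mul_eq_zero.mp hz2 with h' | h'
        · exfalso; linarith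
        · exact h'
      have hL3z : L3 = 0 := by
        rcases mul_eq_zero.mp hz3 with h' | h'
        · exfalso; linarith
        · exact h'
      have hL4z : L4 = 0 := by
        rcases mul_eq_zero.mp hz4 with h' | h'
        · exfalso; linarith
        · exact h'
      have hfx₀0 : f x₀ = 0 := by
        rw [f_decomp]
        simp only [← hL1_def, ← hL2_def, ← hL3_def, ← hL4_def, ← hL5_def,
          hL1z, hL2z, hL3z, hL4z, h]
        ring
      rw [hfx₀0] at hfx₀
      -- 0 < u but also sum ≥ 0 and sum ≤ u ≤ 0
      linarith
  -- dirac instantiation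
  have hdirac : ∀ ρ₀ ∈ Set.Icc a b,
      (ml - ρ₀) * L1 + (ρ₀ - mu) * L2 + (dl - |ρ₀ - mhat|) * L3
        + (|ρ₀ - mhat| - du) * L4 + (revenueRate R C μ n ρ₀) * L5 ≤ u := by
    intro ρ₀ hρ₀
    have hn0 : (Measure.dirac ρ₀) (Set.Icc a b)ᶜ = 0 := by
      rw [Measure.dirac_apply' _ measurableSet_Icc.compl]
      simp [hρ₀]
    have h := hperP (Measure.dirac ρ₀) (by infer_instance) hn0
    rw [integral_dirac, integral_dirac, integral_dirac] at h
    exact h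
  -- define the multipliers
  set θ₁ := L3 / L5 with hθ1_def
  set θ₂ := L4 / L5 with hθ2_def
  set θ₃ := L1 / L5 with hθ3_def
  set θ₄ := L2 / L5 with hθ4_def
  have hθ1 : 0 ≤ θ₁ := by
    rw [hθ1_def, div_nonneg_iff]
    right; exact ⟨hL3, hL5neg.le⟩
  have hθ2 : 0 ≤ θ₂ := by
    rw [hθ2_def, div_nonneg_iff]
    right; exact ⟨hL4, hL5neg.le⟩
  have hθ3 : 0 ≤ θ₃ := by
    rw [hθ3_def, div_nonneg_iff]
    right; exact ⟨hL1, hL5neg.le⟩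
  have hθ4 : 0 ≤ θ₄ := by
    rw [hθ4_def, div_nonneg_iff]
    right; exact ⟨hL2, hL5neg.le⟩
  have ht1 : θ₁ * L5 = L3 := div_mul_cancel₀ _ hL5neg.ne
  have ht2 : θ₂ * L5 = L4 := div_mul_cancel₀ _ hL5neg.ne
  have ht3 : θ₃ * L5 = L1 := div_mul_cancel₀ _ hL5neg.ne
  have ht4 : θ₄ * L5 = L2 := div_mul_cancel₀ _ hL5neg.ne
  -- the key per-point lower bound
  have hX : ∀ ρ₀ ∈ Set.Icc a b,
      v - ε ≤ (ml - ρ₀) * θ₃ + (ρ₀ - mu) * θ₄ + (dl - |ρ₀ - mhat|) * θ₁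
        + (|ρ₀ - mhat| - du) * θ₂ + revenueRate R C μ n ρ₀ := by
    intro ρ₀ hρ₀
    have h := le_trans (hdirac ρ₀ hρ₀) (le_trans hup (le_of_eq hfpt))
    have hXe : ((ml - ρ₀) * θ₃ + (ρ₀ - mu) * θ₄ + (dl - |ρ₀ - mhat|) * θ₁
        + (|ρ₀ - mhat| - du) * θ₂ + revenueRate R C μ n ρ₀) * L5
        = (ml - ρ₀) * L1 + (ρ₀ - mu) * L2 + (dl - |ρ₀ - mhat|) * L3
          + (|ρ₀ - mhat| - du) * L4 + (revenueRate R C μ n ρ₀) * L5 := by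
      linear_combination (ml - ρ₀) * ht3 + (ρ₀ - mu) * ht4 + (dl - |ρ₀ - mhat|) * ht1
        + (|ρ₀ - mhat| - du) * ht2
    nlinarith [h, hXe, hL5neg]
  refine ⟨(v - ε) - (θ₁ * dl - θ₂ * du + θ₃ * ml - θ₄ * mu), θ₁, θ₂, θ₃, θ₄,
    hθ1, hθ2, hθ3, hθ4, by ring, ?_, ?_, ?_⟩
  · have := hX a ⟨le_refl a, hab.le⟩
    linarith
  · have := hX mhat ⟨hmhat.1.le, hmhat.2.le⟩
    rw [sub_self, abs_zero] at this
    linarith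
  · have := hX b ⟨hab.le, le_refl b⟩
    linarith

end Stmt12Aux

set_option maxHeartbeats 1000000 in
/-- Strong duality for the worst-case expected revenue rate over the data-driven
MAD ambiguity set, under a Slater condition. -/
theorem stmt12 (R C μ : ℝ) (hR : 0 < R) (hC : 0 < C) (hμ : 0 < μ)
    (n : ℕ) (hn : 1 ≤ n) (hRC : C * (n : ℝ) ≤ R * μ)
    (a b mhat ml mu dl du : ℝ) (ha : 0 ≤ a) (hab : a < b)
    (hmhat : mhat ∈ Set.Ioo a b) (hm : ml ≤ mu) (hdlu : dl ≤ du)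
    (hSlater : ∃ P₀ : Measure ℝ, IsProbabilityMeasure P₀ ∧ P₀ (Set.Icc a b)ᶜ = 0 ∧
      ml < (∫ ρ, ρ ∂P₀) ∧ (∫ ρ, ρ ∂P₀) < mu ∧
      dl < (∫ ρ, |ρ - mhat| ∂P₀) ∧ (∫ ρ, |ρ - mhat| ∂P₀) < du) :
    sInf ((fun P => ∫ ρ, revenueRate R C μ n ρ ∂P) '' DDMADSet a b mhat ml mu dl du) =
    sSup {v : ℝ | ∃ γ θ₁ θ₂ θ₃ θ₄ : ℝ, 0 ≤ θ₁ ∧ 0 ≤ θ₂ ∧ 0 ≤ θ₃ ∧ 0 ≤ θ₄ ∧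
      v = γ + θ₁ * dl - θ₂ * du + θ₃ * ml - θ₄ * mu ∧
      (θ₁ - θ₂) * |a - mhat| + (θ₃ - θ₄) * a + γ ≤ revenueRate R C μ n a ∧
      (θ₃ - θ₄) * mhat + γ ≤ revenueRate R C μ n mhat ∧
      (θ₁ - θ₂) * |b - mhat| + (θ₃ - θ₄) * b + γ ≤ revenueRate R C μ n b} := by
  classical
  obtain ⟨P₀, hP₀p, hP₀n, hml₀, hmu₀, hdl₀, hdu₀⟩ := hSlater
  haveI := hP₀p
  have hK0 : 0 ≤ R * μ - C * (n : ℝ) := by linarith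
  have hP₀mem : P₀ ∈ DDMADSet a b mhat ml mu dl du :=
    ⟨hP₀p, hP₀n, hml₀.le, hmu₀.le, hdl₀.le, hdu₀.le⟩
  set Pim := (fun P => ∫ ρ, revenueRate R C μ n ρ ∂P) '' DDMADSet a b mhat ml mu dl du
    with hPim_def
  set Dse := {v : ℝ | ∃ γ θ₁ θ₂ θ₃ θ₄ : ℝ, 0 ≤ θ₁ ∧ 0 ≤ θ₂ ∧ 0 ≤ θ₃ ∧ 0 ≤ θ₄ ∧
      v = γ + θ₁ * dl - θ₂ * du + θ₃ * ml - θ₄ * mu ∧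
      (θ₁ - θ₂) * |a - mhat| + (θ₃ - θ₄) * a + γ ≤ revenueRate R C μ n a ∧
      (θ₃ - θ₄) * mhat + γ ≤ revenueRate R C μ n mhat ∧
      (θ₁ - θ₂) * |b - mhat| + (θ₃ - θ₄) * b + γ ≤ revenueRate R C μ n b} with hDse_def
  have hPsetne : Pim.Nonempty := ⟨_, ⟨P₀, hP₀mem, rfl⟩⟩
  obtain ⟨Mr, hMr⟩ := Stmt12Aux.rev_bound R C μ n (a := a) (b := b) ha
  have hlow : ∀ w ∈ Pim, -Mr ≤ w := by
    rintro w ⟨P, ⟨hp, hn0, -, -, -, -⟩, rfl⟩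
    haveI := hp
    refine Stmt12Aux.integral_ge_of_icc hn0 (Stmt12Aux.int_r ha hn0) (fun ρ hρ => ?_)
    have := hMr ρ hρ
    rw [abs_le] at this
    linarith [this.1]
  have hbddP : BddBelow Pim := ⟨-Mr, hlow⟩
  have hweak : ∀ x ∈ Dse, ∀ w ∈ Pim, x ≤ w := by
    rintro x ⟨γ, θ₁, θ₂, θ₃, θ₄, h1, h2, h3, h4, hxe, hca, hcm, hcb⟩
      w ⟨P, ⟨hp, hn0, hmlP, hmuP, hdlP, hduP⟩, rfl⟩
    rw [hxe]
    exact Stmt12Aux.weak_dual R C μ n hn hK0 a b mhat ml mu dl du ha hab hmhat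
      γ θ₁ θ₂ θ₃ θ₄ h1 h2 h3 h4 hca hcm hcb P hp hn0 hmlP hmuP hdlP hduP
  have hDne : Dse.Nonempty := by
    refine ⟨min (revenueRate R C μ n a) (min (revenueRate R C μ n mhat) (revenueRate R C μ n b)),
      min (revenueRate R C μ n a) (min (revenueRate R C μ n mhat) (revenueRate R C μ n b)),
      0, 0, 0, 0, le_refl 0, le_refl 0, le_refl 0, le_refl 0, by ring, ?_, ?_, ?_⟩
    · have := min_le_left (revenueRate R C μ n a)
        (min (revenueRate R C μ n mhat) (revenueRate R C μ n b))
      nlinarith [this]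
    · have h1 := min_le_right (revenueRate R C μ n a)
        (min (revenueRate R C μ n mhat) (revenueRate R C μ n b))
      have h2 := min_le_left (revenueRate R C μ n mhat) (revenueRate R C μ n b)
      nlinarith [h1, h2]
    · have h1 := min_le_right (revenueRate R C μ n a)
        (min (revenueRate R C μ n mhat) (revenueRate R C μ n b))
      have h2 := min_le_right (revenueRate R C μ n mhat) (revenueRate R C μ n b)
      nlinarith [h1, h2]
  have hbddD : BddAbove Dse := ⟨∫ ρ, revenueRate R C μ n ρ ∂P₀,
    fun x hx => hweak x hx _ ⟨P₀, hP₀mem, rfl⟩⟩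
  apply le_antisymm
  · apply le_of_forall_pos_le_add
    intro ε hε
    have hv : ∀ P : Measure ℝ, IsProbabilityMeasure P → P (Set.Icc a b)ᶜ = 0 →
        ml ≤ (∫ ρ, ρ ∂P) → (∫ ρ, ρ ∂P) ≤ mu → dl ≤ (∫ ρ, |ρ - mhat| ∂P) →
        (∫ ρ, |ρ - mhat| ∂P) ≤ du → sInf Pim ≤ ∫ ρ, revenueRate R C μ n ρ ∂P :=
      fun P hp hn0 h1 h2 h3 h4 => csInf_le hbddP ⟨P, ⟨hp, hn0, h1, h2, h3, h4⟩, rfl⟩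
    obtain ⟨γ, θ₁, θ₂, θ₃, θ₄, h1, h2, h3, h4, heq, hca, hcm, hcb⟩ :=
      Stmt12Aux.strong_dual R C μ n a b mhat ml mu dl du ha hab hmhat P₀ hP₀p hP₀n
        hml₀ hmu₀ hdl₀ hdu₀ (sInf Pim) ε hε hv
    have hmem : sInf Pim - ε ∈ Dse := ⟨γ, θ₁, θ₂, θ₃, θ₄, h1, h2, h3, h4, heq, hca, hcm, hcb⟩
    have := le_csSup hbddD hmem
    linarith
  · exact csSup_le hDne (fun x hx => le_csInf hPsetne (fun w hw => hweak x hx w hw))
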